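/- Let 𝒜 be a symmetric Picard category. The family j is a monoidal natural transformation: besides the naturality j_a ≫ (((f⁻¹))^• ⊗ f) = j_b for every f : a ⟶ b, for all objects a, b one has (j_a ⊗ j_b) ≫ m_{a^•,a,b^•,b} ≫ ((s_{a^•,b^•} ≫ κ_{b,a}) ⊗ 𝟙_{a⊗b}) = λ_𝟙 ≫ j_{a⊗b} as morphisms 𝟙 ⊗ 𝟙 ⟶ (a ⊗ b)^• ⊗ (a ⊗ b), where m_{x,y,z,w} : (x ⊗ y) ⊗ (z ⊗ w) ⟶ (x ⊗ z) ⊗ (y ⊗ w) is the canonical middle-four interchange isomorphism built from associators and the braiding y ⊗ z ⟶ z ⊗ y, s is the braiding and λ_𝟙 the left unitor at the unit object. -/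

import Mathlib

open CategoryTheory Category MonoidalCategory

universe v u

/-- A symmetric Picard category: a symmetric monoidal groupoid equipped with, for every
object `a`, a chosen object `dual a` and a chosen isomorphism `j a : 𝟙_ C ≅ dual a ⊗ a`. -/
class SymmetricPicard (C : Type u) [Groupoid.{v} C] [MonoidalCategory C]
    [SymmetricCategory C] where
  dual : C → C
  j : ∀ a : C, 𝟙_ C ≅ dual a ⊗ a

namespace SymmetricPicard

variable {C : Type u} [Groupoid.{v} C] [MonoidalCategory C] [SymmetricCategory C]
  [SymmetricPicard C]

/-- The dual of a morphism `f : a ⟶ b`: the unique morphism `g : dual b ⟶ dual a`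
such that `(j b).hom ≫ (g ⊗ inv f) = (j a).hom`. -/
noncomputable def dualHom {a b : C} (f : a ⟶ b) : dual b ⟶ dual a :=
  @Classical.epsilon _
    ⟨(ρ_ (dual b)).inv ≫ (dual b ◁ (j a).hom) ≫ (dual b ◁ (dual a ◁ f)) ≫
      (α_ (dual b) (dual a) b).inv ≫ ((β_ (dual b) (dual a)).hom ▷ b) ≫
      (α_ (dual a) (dual b) b).hom ≫ (dual a ◁ (j b).inv) ≫ (ρ_ (dual a)).hom⟩
    (fun g => (j b).hom ≫ (g ⊗ₘ inv f) = (j a).hom)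

/-- The canonical pairing `(a^• ⊗ b^•) ⊗ (b ⊗ a) ⟶ 𝟙`. -/
noncomputable def pairing (a b : C) : (dual a ⊗ dual b) ⊗ (b ⊗ a) ⟶ 𝟙_ C :=
  (α_ (dual a) (dual b) (b ⊗ a)).hom ≫ (𝟙 (dual a) ⊗ₘ (α_ (dual b) b a).inv) ≫
    (𝟙 (dual a) ⊗ₘ ((j b).inv ⊗ₘ 𝟙 a)) ≫ (𝟙 (dual a) ⊗ₘ (λ_ a).hom) ≫ (j a).inv

/-- Laplaza's canonical arrow `κ_{a,b} : a^• ⊗ b^• ⟶ (b ⊗ a)^•`: the unique morphism `f`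
such that `(f ⊗ 𝟙_{b⊗a}) ≫ j_{b⊗a}⁻¹` is the canonical pairing. -/
noncomputable def kappa (a b : C) : dual a ⊗ dual b ⟶ dual (b ⊗ a) :=
  @Classical.epsilon _
    ⟨(ρ_ (dual a ⊗ dual b)).inv ≫ ((dual a ⊗ dual b) ◁ (j (b ⊗ a)).hom) ≫
      ((dual a ⊗ dual b) ◁ (β_ (dual (b ⊗ a)) (b ⊗ a)).hom) ≫
      (α_ (dual a ⊗ dual b) (b ⊗ a) (dual (b ⊗ a))).inv ≫
      (pairing a b ▷ dual (b ⊗ a)) ≫ (λ_ (dual (b ⊗ a))).hom⟩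
    (fun f => (f ⊗ₘ 𝟙 (b ⊗ a)) ≫ (j (b ⊗ a)).inv = pairing a b)


/-- The canonical middle-four interchange isomorphism
`(x ⊗ y) ⊗ (z ⊗ w) ⟶ (x ⊗ z) ⊗ (y ⊗ w)`, built from associators and the braiding
`y ⊗ z ⟶ z ⊗ y`. -/
def middleFour (x y z w : C) : (x ⊗ y) ⊗ (z ⊗ w) ⟶ (x ⊗ z) ⊗ (y ⊗ w) :=
  (α_ x y (z ⊗ w)).hom ≫ (x ◁ (α_ y z w).inv) ≫ (x ◁ ((β_ y z).hom ▷ w)) ≫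
    (x ◁ (α_ z y w).hom) ≫ (α_ x z (y ⊗ w)).inv


/-- Tensoring on the right with `b` is an equivalence of categories. -/
noncomputable def tensorRightEquiv (b : C) : C ≌ C :=
  CategoryTheory.Equivalence.mk (tensorRight b) (tensorRight (dual b))
    (NatIso.ofComponents (fun X =>
      (ρ_ X).symm ≪≫ whiskerLeftIso X ((β_ b (dual b)) ≪≫ (j b).symm).symm ≪≫
        (α_ X b (dual b)).symm) (by
      intro X Y f
      dsimp
      simp only [whiskerLeftIso_hom]
      rw [rightUnitor_inv_naturality_assoc, ← whisker_exchange_assoc,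
        associator_inv_naturality_left]
      simp))
    (NatIso.ofComponents (fun X =>
      (α_ X (dual b) b) ≪≫ whiskerLeftIso X (j b).symm ≪≫ (ρ_ X)) (by
      intro X Y f
      dsimp
      simp only [whiskerLeftIso_hom]
      rw [associator_naturality_left_assoc, ← whisker_exchange_assoc, rightUnitor_naturality]
      simp))

noncomputable instance (b : C) : (tensorRight b).IsEquivalence :=
  (tensorRightEquiv b).isEquivalence_functor

lemma exists_whiskerRight_eq (b : C) {p q : C} (k : p ⊗ b ⟶ q ⊗ b) :
    ∃ g : p ⟶ q, g ▷ b = k :=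
  ⟨(tensorRight b).preimage k, (tensorRight b).map_preimage k⟩

lemma exists_dualHom {a b : C} (f : a ⟶ b) :
    ∃ g : dual b ⟶ dual a, (j b).hom ≫ (g ⊗ₘ inv f) = (j a).hom := by
  obtain ⟨g, hg⟩ := exists_whiskerRight_eq b ((j b).inv ≫ (j a).hom ≫ (dual a ◁ f))
  refine ⟨g, ?_⟩
  rw [MonoidalCategory.tensorHom_def, hg]
  simp [← MonoidalCategory.whiskerLeft_comp]

lemma dualHom_spec {a b : C} (f : a ⟶ b) :
    (j b).hom ≫ (dualHom f ⊗ₘ inv f) = (j a).hom :=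
  Classical.epsilon_spec (exists_dualHom f)

lemma exists_kappa (a b : C) :
    ∃ f : dual a ⊗ dual b ⟶ dual (b ⊗ a),
      (f ⊗ₘ 𝟙 (b ⊗ a)) ≫ (j (b ⊗ a)).inv = pairing a b := by
  obtain ⟨g, hg⟩ := exists_whiskerRight_eq (b ⊗ a) (pairing a b ≫ (j (b ⊗ a)).hom)
  refine ⟨g, ?_⟩
  rw [tensorHom_id, hg]
  simp

lemma kappa_spec (a b : C) :
    (kappa a b ⊗ₘ 𝟙 (b ⊗ a)) ≫ (j (b ⊗ a)).inv = pairing a b :=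
  Classical.epsilon_spec (exists_kappa a b)

lemma key (a b : C) :
    ((j a).hom ⊗ₘ (j b).hom) ≫ middleFour (dual a) a (dual b) b ≫
      ((β_ (dual a) (dual b)).hom ⊗ₘ 𝟙 (a ⊗ b)) ≫ pairing b a = (λ_ (𝟙_ C)).hom := by
  set X := dual a
  set Y := dual b
  calc ((j a).hom ⊗ₘ (j b).hom) ≫ middleFour X a Y b ≫
      ((β_ X Y).hom ⊗ₘ 𝟙 (a ⊗ b)) ≫ pairing b a
      = (λ_ (𝟙_ C)).hom ≫ (j b).hom ≫ (λ_ (Y ⊗ b)).inv ≫ (α_ (𝟙_ C) Y b).inv ≫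
          (((j a).hom ▷ Y) ▷ b) ≫ ((β_ (X ⊗ a) Y).hom ▷ b) ≫ (α_ Y (X ⊗ a) b).hom ≫
          (Y ◁ ((j a).inv ▷ b)) ≫ (Y ◁ (λ_ b).hom) ≫ (j b).inv := by
        rw [tensorHom_def', BraidedCategory.braiding_tensor_left_hom]
        simp only [middleFour, pairing, id_tensorHom, tensorHom_id]
        coherence
    _ = (λ_ (𝟙_ C)).hom ≫ (j b).hom ≫ (λ_ (Y ⊗ b)).inv ≫ (α_ (𝟙_ C) Y b).inv ≫
          ((β_ (𝟙_ C) Y).hom ▷ b) ≫ ((Y ◁ (j a).hom) ▷ b) ≫ (α_ Y (X ⊗ a) b).hom ≫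
          (Y ◁ ((j a).inv ▷ b)) ≫ (Y ◁ (λ_ b).hom) ≫ (j b).inv := by
        slice_lhs 5 6 => rw [← comp_whiskerRight, BraidedCategory.braiding_naturality_left,
          comp_whiskerRight]
        simp only [Category.assoc]
    _ = (λ_ (𝟙_ C)).hom := by
        rw [braiding_tensorUnit_left]
        simp


/-- The family `j` is a monoidal natural transformation: it is natural,
`j_a ≫ ((f⁻¹)^• ⊗ f) = j_b` for every `f : a ⟶ b`, and it is compatible with the tensor
product: `(j_a ⊗ j_b) ≫ m_{a^•,a,b^•,b} ≫ ((s_{a^•,b^•} ≫ κ_{b,a}) ⊗ 𝟙_{a⊗b}) =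
λ_𝟙 ≫ j_{a⊗b}`. -/
theorem statement7 :
    (∀ {a b : C} (f : a ⟶ b), (j a).hom ≫ (dualHom (inv f) ⊗ₘ f) = (j b).hom) ∧
    (∀ a b : C,
        ((j a).hom ⊗ₘ (j b).hom) ≫ middleFour (dual a) a (dual b) b ≫
            (((β_ (dual a) (dual b)).hom ≫ kappa b a) ⊗ₘ 𝟙 (a ⊗ b)) =
          (λ_ (𝟙_ C)).hom ≫ (j (a ⊗ b)).hom) := by
  constructor
  · intro a b f
    have h := dualHom_spec (inv f)
    rwa [IsIso.inv_inv] at h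
  · intro a b
    have hk : (kappa b a ⊗ₘ 𝟙 (a ⊗ b)) = pairing b a ≫ (j (a ⊗ b)).hom := by
      rw [← kappa_spec b a]
      simp
    have hsplit : (((β_ (dual a) (dual b)).hom ≫ kappa b a) ⊗ₘ 𝟙 (a ⊗ b)) =
        ((β_ (dual a) (dual b)).hom ⊗ₘ 𝟙 (a ⊗ b)) ≫ (kappa b a ⊗ₘ 𝟙 (a ⊗ b)) := by
      rw [tensorHom_comp_tensorHom, Category.comp_id]
    rw [hsplit, hk]
    rw [reassoc_of% key a b]


end SymmetricPicard
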